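/- Let g ≥ 1 and let τ, σ ∈ M_g(ℂ) with det(Im τ) ≠ 0 and det(Im σ) ≠ 0. Suppose M ∈ M_g(ℂ) with det M ≠ 0 and R ∈ M_{2g}(ℤ) satisfy M·Π(τ) = Π(σ)·R (i.e. X_τ and X_σ are isogenous). Then F_τ = F_σ as subfields of ℂ, and in particular [F_τ : ℚ] = [F_σ : ℚ]. Consequently F_τ and [F_τ : ℚ] depend only on the complex torus X_τ up to isogeny and not on the chosen period matrix. -/

import Mathlib

open Matrix Module IntermediateField
open scoped ComplexOrder

noncomputable section

/-- The period matrix `Π(τ) = (τ | I_g)`, a `g × 2g` complex matrix. -/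
def PeriodMatrix (g : ℕ) (τ : Matrix (Fin g) (Fin g) ℂ) :
    Matrix (Fin g) (Fin g ⊕ Fin g) ℂ :=
  Matrix.fromCols τ 1

/-- `F_τ`: the subfield of `ℂ` generated over `ℚ` by the entries of `τ`. -/
def EntryField (g : ℕ) (τ : Matrix (Fin g) (Fin g) ℂ) : IntermediateField ℚ ℂ :=
  IntermediateField.adjoin ℚ {x : ℂ | ∃ i j, τ i j = x}

section Aux

variable {K : IntermediateField ℚ ℂ}

lemma aux_det_mem {n : Type*} [Fintype n] [DecidableEq n]
    {N : Matrix n n ℂ} (h : ∀ i j, N i j ∈ K) : N.det ∈ K := by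
  rw [Matrix.det_apply]
  exact sum_mem fun s _ => zsmul_mem (prod_mem fun i _ => h _ _) _

lemma aux_mul_entry_mem {m p n : Type*} [Fintype p] {A : Matrix m p ℂ} {B : Matrix p n ℂ}
    (hA : ∀ i j, A i j ∈ K) (hB : ∀ i j, B i j ∈ K) (i : m) (j : n) : (A * B) i j ∈ K := by
  rw [Matrix.mul_apply]
  exact sum_mem fun k _ => mul_mem (hA _ _) (hB _ _)

lemma aux_inv_entry_mem {n : Type*} [Fintype n] [DecidableEq n]
    {N : Matrix n n ℂ} (h : ∀ i j, N i j ∈ K) (i j : n) : N⁻¹ i j ∈ K := by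
  rw [Matrix.inv_def]
  have hadj : N.adjugate i j ∈ K := by
    rw [Matrix.adjugate_apply]
    refine aux_det_mem fun a b => ?_
    rw [Matrix.updateRow_apply]
    split
    · simp only [Pi.single_apply]
      split
      · exact one_mem K
      · exact zero_mem K
    · exact h _ _
  have hd : Ring.inverse N.det ∈ K := by
    rw [Ring.inverse_eq_inv']
    exact inv_mem (aux_det_mem h)
  simpa using mul_mem hd hadj

lemma aux_fromColumns_map {m n₁ n₂ : Type*} (A : Matrix m n₁ ℂ) (B : Matrix m n₂ ℂ)
    (f : ℂ → ℂ) : (fromCols A B).map f = fromCols (A.map f) (B.map f) := by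
  ext i (j | j) <;> simp [fromCols]

end Aux

theorem entryField_eq_of_isogeny
    (g : ℕ) (hg : 1 ≤ g)
    (τ σ : Matrix (Fin g) (Fin g) ℂ)
    (hτ : (τ.map Complex.im).det ≠ 0) (hσ : (σ.map Complex.im).det ≠ 0)
    (M : Matrix (Fin g) (Fin g) ℂ) (R : Matrix (Fin g ⊕ Fin g) (Fin g ⊕ Fin g) ℤ)
    (hM : M.det ≠ 0)
    (hMR : M * PeriodMatrix g τ = PeriodMatrix g σ * R.map (Int.cast : ℤ → ℂ)) :
    EntryField g τ = EntryField g σ := by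
  classical
  set c : ℂ →+* ℂ := starRingEnd ℂ with hc
  set Rc : Matrix (Fin g ⊕ Fin g) (Fin g ⊕ Fin g) ℂ := R.map (Int.cast : ℤ → ℂ) with hRcdef
  have hRcEntry : ∀ i j, Rc i j = ((R i j : ℤ) : ℂ) := fun i j => rfl
  set A := Rc.toBlocks₁₁ with hA
  set B := Rc.toBlocks₁₂ with hB
  set C := Rc.toBlocks₂₁ with hC
  set D := Rc.toBlocks₂₂ with hD
  have hRcBlocks : Rc = fromBlocks A B C D := (fromBlocks_toBlocks Rc).symm
  -- block form of the isogeny relation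
  have hblocks := hMR
  rw [PeriodMatrix, PeriodMatrix, Matrix.mul_fromCols, hRcBlocks,
    Matrix.fromCols_mul_fromBlocks, Matrix.fromCols_ext_iff] at hblocks
  obtain ⟨h1, h2⟩ := hblocks
  simp only [Matrix.mul_one, Matrix.one_mul] at h1 h2
  -- h1 : M * τ = σ * A + C,  h2 : M = σ * B + D
  -- conjugated relation
  have hRcConj : Rc.map c = Rc := by
    ext i j
    simp [hRcEntry, Matrix.map_apply]
  have hmapone : (1 : Matrix (Fin g) (Fin g) ℂ).map c = 1 :=
    Matrix.map_one c (map_zero c) (map_one c)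
  have hconj : (M.map c) * fromCols (τ.map c) (1 : Matrix (Fin g) (Fin g) ℂ)
      = fromCols (σ.map c) (1 : Matrix (Fin g) (Fin g) ℂ) * Rc := by
    have := congrArg (fun X => X.map (c : ℂ → ℂ)) hMR
    simpa only [Matrix.map_mul, PeriodMatrix, aux_fromColumns_map, hmapone, hRcConj]
      using this
  rw [Matrix.mul_fromCols, hRcBlocks, Matrix.fromCols_mul_fromBlocks,
    Matrix.fromCols_ext_iff] at hconj
  obtain ⟨h1c, h2c⟩ := hconj
  simp only [Matrix.mul_one, Matrix.one_mul] at h1c h2c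
  -- determinant of the "doubled" period matrices
  have hQdet : ∀ η : Matrix (Fin g) (Fin g) ℂ, (η.map Complex.im).det ≠ 0 →
      (fromBlocks η 1 (η.map c) 1).det ≠ 0 := by
    intro η hη
    rw [det_fromBlocks_one₂₂, Matrix.one_mul]
    have hdiff : η - η.map c = ((2 : ℂ) * Complex.I) •
        ((η.map Complex.im).map (Complex.ofReal : ℝ → ℂ)) := by
      ext i j
      simp only [Matrix.sub_apply, Matrix.map_apply, Matrix.smul_apply, smul_eq_mul, hc]
      rw [Complex.sub_conj]
      push_cast
      ring
    rw [hdiff, Matrix.det_smul]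
    have : ((η.map Complex.im).map (Complex.ofReal : ℝ → ℂ)).det
        = ((η.map Complex.im).det : ℂ) := (RingHom.map_det Complex.ofRealHom _).symm
    rw [this]
    refine mul_ne_zero (pow_ne_zero _ (mul_ne_zero two_ne_zero Complex.I_ne_zero)) ?_
    exact_mod_cast Complex.ofReal_ne_zero.mpr hη
  -- the doubled relation
  have hQ : fromBlocks M 0 0 (M.map c) * fromBlocks τ 1 (τ.map c) 1
      = fromBlocks σ 1 (σ.map c) 1 * fromBlocks A B C D := by
    rw [Matrix.fromBlocks_multiply, Matrix.fromBlocks_multiply]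
    simp only [Matrix.zero_mul, Matrix.mul_zero, Matrix.mul_one, Matrix.one_mul,
      add_zero, zero_add]
    rw [← h1, ← h2, ← h1c, ← h2c]
  have hMc : (M.map c).det ≠ 0 := by
    have hdm : (M.map c).det = c M.det := (RingHom.map_det c M).symm
    rw [hdm]
    exact fun h0 => hM ((map_eq_zero_iff c c.injective).mp h0)
  have hdet := congrArg Matrix.det hQ
  rw [Matrix.det_mul, Matrix.det_mul, Matrix.det_fromBlocks_zero₁₂, ← hRcBlocks] at hdet
  have hRdet : Rc.det ≠ 0 := by
    intro h0
    rw [h0, mul_zero] at hdet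
    exact (mul_ne_zero (mul_ne_zero hM hMc) (hQdet τ hτ)) hdet
  have hRu : IsUnit Rc.det := isUnit_iff_ne_zero.mpr hRdet
  have hMu : IsUnit M.det := isUnit_iff_ne_zero.mpr hM
  have hRcinv : Rc * Rc⁻¹ = 1 := Matrix.mul_nonsing_inv _ hRu
  have hPσ : PeriodMatrix g σ = M * PeriodMatrix g τ * Rc⁻¹ := by
    rw [hMR, Matrix.mul_assoc, hRcinv, Matrix.mul_one]
  set A' := Rc⁻¹.toBlocks₁₁ with hA'
  set B' := Rc⁻¹.toBlocks₁₂ with hB'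
  set C' := Rc⁻¹.toBlocks₂₁ with hC'
  set D' := Rc⁻¹.toBlocks₂₂ with hD'
  have hRicBlocks : Rc⁻¹ = fromBlocks A' B' C' D' := (fromBlocks_toBlocks _).symm
  rw [PeriodMatrix, PeriodMatrix, Matrix.mul_fromCols, hRicBlocks,
    Matrix.fromCols_mul_fromBlocks, Matrix.fromCols_ext_iff] at hPσ
  obtain ⟨hs1, hs2⟩ := hPσ
  simp only [Matrix.mul_one, Matrix.one_mul] at hs1 hs2
  -- hs1 : σ = M * τ * A' + M * C',  hs2 : 1 = M * τ * B' + M * D'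
  have hMinv : M⁻¹ = τ * B' + D' := by
    calc M⁻¹ = M⁻¹ * 1 := (Matrix.mul_one _).symm
      _ = M⁻¹ * (M * τ * B' + M * D') := by rw [← hs2]
      _ = τ * B' + D' := by
          rw [Matrix.mul_add, Matrix.mul_assoc M τ B',
            ← Matrix.mul_assoc M⁻¹ M (τ * B'), ← Matrix.mul_assoc M⁻¹ M D',
            Matrix.nonsing_inv_mul _ hMu, Matrix.one_mul, Matrix.one_mul]
  have hτeq : τ = M⁻¹ * (σ * A + C) := by
    rw [← h1, ← Matrix.mul_assoc, Matrix.nonsing_inv_mul _ hMu, Matrix.one_mul]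
  -- membership bookkeeping
  have hgen : ∀ (η : Matrix (Fin g) (Fin g) ℂ) i j, η i j ∈ EntryField g η :=
    fun η i j => IntermediateField.subset_adjoin _ _ ⟨i, j, rfl⟩
  have hKint : ∀ (L : IntermediateField ℚ ℂ) (z : ℤ), ((z : ℂ)) ∈ L :=
    fun L z => intCast_mem L z
  -- direction 1 : entries of σ lie in EntryField g τ
  have hKτR : ∀ i j, (Rc⁻¹) i j ∈ EntryField g τ :=
    aux_inv_entry_mem (fun i j => by rw [hRcEntry]; exact hKint _ _)
  have hKτA' : ∀ i j, A' i j ∈ EntryField g τ := fun i j => hKτR _ _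
  have hKτB' : ∀ i j, B' i j ∈ EntryField g τ := fun i j => hKτR _ _
  have hKτC' : ∀ i j, C' i j ∈ EntryField g τ := fun i j => hKτR _ _
  have hKτD' : ∀ i j, D' i j ∈ EntryField g τ := fun i j => hKτR _ _
  have hKτMinv : ∀ i j, M⁻¹ i j ∈ EntryField g τ := by
    rw [hMinv]
    exact fun i j => add_mem (aux_mul_entry_mem (hgen τ) hKτB' i j) (hKτD' i j)
  have hKτM : ∀ i j, M i j ∈ EntryField g τ := by
    intro i j
    rw [← Matrix.nonsing_inv_nonsing_inv M hMu]
    exact aux_inv_entry_mem hKτMinv i j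
  have hKτσ : ∀ i j, σ i j ∈ EntryField g τ := by
    rw [hs1]
    exact fun i j => add_mem
      (aux_mul_entry_mem (aux_mul_entry_mem hKτM (hgen τ)) hKτA' i j)
      (aux_mul_entry_mem hKτM hKτC' i j)
  -- direction 2 : entries of τ lie in EntryField g σ
  have hKσA : ∀ i j, A i j ∈ EntryField g σ := fun i j => by
    show Rc _ _ ∈ _; rw [hRcEntry]; exact hKint _ _
  have hKσB : ∀ i j, B i j ∈ EntryField g σ := fun i j => by
    show Rc _ _ ∈ _; rw [hRcEntry]; exact hKint _ _
  have hKσC : ∀ i j, C i j ∈ EntryField g σ := fun i j => by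
    show Rc _ _ ∈ _; rw [hRcEntry]; exact hKint _ _
  have hKσD : ∀ i j, D i j ∈ EntryField g σ := fun i j => by
    show Rc _ _ ∈ _; rw [hRcEntry]; exact hKint _ _
  have hKσM : ∀ i j, M i j ∈ EntryField g σ := by
    rw [h2]
    exact fun i j => add_mem (aux_mul_entry_mem (hgen σ) hKσB i j) (hKσD i j)
  have hKστ : ∀ i j, τ i j ∈ EntryField g σ := by
    rw [hτeq]
    exact fun i j => aux_mul_entry_mem (aux_inv_entry_mem hKσM)
      (fun a b => add_mem (aux_mul_entry_mem (hgen σ) hKσA a b) (hKσC a b)) i j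
  apply le_antisymm
  · rw [show EntryField g τ = IntermediateField.adjoin ℚ {x : ℂ | ∃ i j, τ i j = x} from rfl,
      IntermediateField.adjoin_le_iff]
    rintro x ⟨i, j, rfl⟩
    exact hKστ i j
  · rw [show EntryField g σ = IntermediateField.adjoin ℚ {x : ℂ | ∃ i j, σ i j = x} from rfl,
      IntermediateField.adjoin_le_iff]
    rintro x ⟨i, j, rfl⟩
    exact hKτσ i j

end
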